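/- Let φ be the unique solution of the ODE φ'(y) = f(y, φ(y)) with initial condition φ(y₀) = x₀, where y₀ < 0, 0 < x₀ < x_-, and f(y, Φ) = -y / ( α·(V(Φ/d) - v∘ + y) + β·y/Φ² ) for (y, Φ) ∈ (-∞, 0) × (0, x_-), defined on its maximal interval (𝔶₋, 𝔶₊) ⊆ (-∞, 0) containing y₀, and suppose x₀ ≤ x_- /2. Then φ(y) ≥ ( 1/x₀ + (y - y₀)/β )^{-1} for all y ∈ [y₀, 𝔶₊); in particular inf_{y ∈ [y₀, 𝔶₊)} φ(y) ≥ ( 1/x₀ + (-y₀)/β )^{-1} > 0. -/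

import Mathlib

open Real Set

/-- The optimal-velocity function `V(x) = tanh(x-2) - tanh(-2)`. -/
noncomputable def V (x : ℝ) : ℝ := Real.tanh (x - 2) - Real.tanh (-2)

/-- Inverse hyperbolic tangent. -/
noncomputable def artanh (v : ℝ) : ℝ := (1 / 2) * Real.log ((1 + v) / (1 - v))

/-- The equilibrium following distance `x_∞ = d (2 + artanh(v∘ + tanh(-2)))`. -/
noncomputable def xInf (d v₀ : ℝ) : ℝ := d * (2 + _root_.artanh (v₀ + Real.tanh (-2)))

lemma tanh_formula (x : ℝ) : Real.tanh x = (exp (2*x) - 1)/(exp (2*x) + 1) := by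
  rw [Real.tanh_eq_sinh_div_cosh, Real.sinh_eq, Real.cosh_eq, two_mul, Real.exp_add,
    Real.exp_neg]
  have h := Real.exp_pos x
  have h2 : exp x * exp x + 1 > 0 := by positivity
  field_simp

lemma tanh_mono' {a b : ℝ} (h : a < b) : Real.tanh a < Real.tanh b := by
  rw [tanh_formula, tanh_formula]
  have ha := Real.exp_pos (2*a)
  have hb := Real.exp_pos (2*b)
  rw [div_lt_div_iff₀ (by linarith) (by linarith)]
  have : exp (2*a) < exp (2*b) := Real.exp_lt_exp.2 (by linarith)
  nlinarith

lemma tanh_lt_one' (x : ℝ) : Real.tanh x < 1 := by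
  rw [tanh_formula, div_lt_one (by positivity)]
  linarith [Real.exp_pos (2*x)]

lemma tanh_artanh {w : ℝ} (h1 : -1 < w) (h2 : w < 1) : Real.tanh (_root_.artanh w) = w := by
  have hq : exp (2 * _root_.artanh w) = (1+w)/(1-w) := by
    rw [_root_.artanh, show (2:ℝ) * ((1/2) * Real.log ((1+w)/(1-w))) = Real.log ((1+w)/(1-w)) by ring]
    exact Real.exp_log (div_pos (by linarith) (by linarith))
  rw [tanh_formula, hq]
  have hne : (1:ℝ) - w ≠ 0 := by linarith
  field_simp
  ring

/-- `V` at the equilibrium equals `v₀`. -/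
lemma V_xInf {d v₀ : ℝ} (hd : 0 < d) (hv₀ : v₀ ∈ Set.Ioo 0 (1 + Real.tanh 2)) :
    V (xInf d v₀ / d) = v₀ := by
  obtain ⟨hv1, hv2⟩ := hv₀
  have hx : xInf d v₀ / d = 2 + _root_.artanh (v₀ + Real.tanh (-2)) := by
    rw [xInf, mul_div_cancel_left₀ _ hd.ne']
  rw [V, hx, Real.tanh_neg]
  have ht1 : Real.tanh 2 < 1 := tanh_lt_one' 2
  have : Real.tanh (2 + _root_.artanh (v₀ + -Real.tanh 2) - 2) = v₀ + -Real.tanh 2 := by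
    rw [show (2:ℝ) + _root_.artanh (v₀ + -Real.tanh 2) - 2 = _root_.artanh (v₀ + -Real.tanh 2) by ring]
    exact tanh_artanh (by linarith) (by linarith)
  rw [this]
  ring

lemma V_lt_v₀ {d v₀ x : ℝ} (hd : 0 < d) (hv₀ : v₀ ∈ Set.Ioo 0 (1 + Real.tanh 2))
    (hx : x < xInf d v₀) : V (x / d) < v₀ := by
  have h := tanh_mono' (sub_lt_sub_right ((div_lt_div_iff_of_pos_right hd).2 hx) 2)
  have := V_xInf hd hv₀
  rw [V] at this ⊢
  linarith

/-- along the parametrized integral curve `φ` solving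
`φ'(y) = f(y, φ(y)) = -y / ( α (V(φ/d) - v∘ + y) + β y / φ² )` with `φ(y₀) = x₀`,
one has `φ(y) ≥ ( 1/x₀ + (y - y₀)/β )⁻¹` on `[y₀, 𝔶₊)`; in particular
`inf_{y ∈ [y₀, 𝔶₊)} φ(y) ≥ ( 1/x₀ + (-y₀)/β )⁻¹ > 0`. -/
theorem parametrized_curve_avoids_collision (α β d v₀ : ℝ)
    (hα : 0 < α) (hβ : 0 < β) (hd : 0 < d)
    (hv₀ : v₀ ∈ Set.Ioo 0 (1 + Real.tanh 2))
    (xcirc : ℝ) (hxcirc : 0 < xcirc)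
    (xm : ℝ) (hxm : xm = min xcirc (xInf d v₀))
    (y₀ x₀ : ℝ) (hy₀ : y₀ < 0) (hx₀pos : 0 < x₀) (hx₀lt : x₀ < xm)
    (hx₀half : x₀ ≤ xm / 2)
    (yplus : ℝ) (hyplus : y₀ < yplus ∧ yplus ≤ 0)
    (φ : ℝ → ℝ)
    (hφdom : ∀ y : ℝ, y₀ ≤ y → y < yplus → 0 < φ y ∧ φ y < xm)
    (hφode : ∀ y : ℝ, y₀ ≤ y → y < yplus →
      HasDerivAt φ
        (-y / (α * (V (φ y / d) - v₀ + y) + β * y / (φ y) ^ 2)) y)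
    (hφinit : φ y₀ = x₀) :
    (∀ y : ℝ, y₀ ≤ y → y < yplus → (1 / x₀ + (y - y₀) / β)⁻¹ ≤ φ y) ∧
    (∀ y : ℝ, y₀ ≤ y → y < yplus → (1 / x₀ + (-y₀) / β)⁻¹ ≤ φ y) ∧
    0 < (1 / x₀ + (-y₀) / β)⁻¹ := by
  have hxmInf : xm ≤ xInf d v₀ := hxm ▸ min_le_right _ _
  -- main estimate
  have main : ∀ y : ℝ, y₀ ≤ y → y < yplus → (1 / x₀ + (y - y₀) / β)⁻¹ ≤ φ y := by
    intro y1 hy1l hy1r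
    set g : ℝ → ℝ := fun y => 1 / x₀ + (y - y₀) / β - (φ y)⁻¹ with hg
    have hmem : ∀ y ∈ Icc y₀ y1, y₀ ≤ y ∧ y < yplus := fun y hy =>
      ⟨hy.1, lt_of_le_of_lt hy.2 hy1r⟩
    have hφcont : ContinuousOn φ (Icc y₀ y1) := fun y hy =>
      ((hφode y (hmem y hy).1 (hmem y hy).2).continuousAt).continuousWithinAt
    have hgcont : ContinuousOn g (Icc y₀ y1) := by
      apply ContinuousOn.sub
      · exact continuousOn_const.add ((continuousOn_id.sub continuousOn_const).div_const β)
      · exact hφcont.inv₀ fun y hy => (hφdom y (hmem y hy).1 (hmem y hy).2).1.ne'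
    have hmono : MonotoneOn g (Icc y₀ y1) := by
      apply monotoneOn_of_hasDerivWithinAt_nonneg (convex_Icc y₀ y1) hgcont
        (f' := fun y => 1/β - (-(-y / (α * (V (φ y / d) - v₀ + y) + β * y / (φ y) ^ 2)) / (φ y)^2))
      · intro y hy
        rw [interior_Icc] at hy
        have hd1 := (hmem y (Ioo_subset_Icc_self hy)).1
        have hd2 := (hmem y (Ioo_subset_Icc_self hy)).2
        have hP := (hφdom y hd1 hd2).1
        have h1 : HasDerivAt (fun y => 1 / x₀ + (y - y₀) / β) (1/β) y := by
          simpa using (((hasDerivAt_id y).sub_const y₀).div_const β).const_add (1/x₀)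
        exact ((h1.sub ((hφode y hd1 hd2).inv hP.ne')).hasDerivWithinAt)
      · intro y hy
        rw [interior_Icc] at hy
        have hd1 := (hmem y (Ioo_subset_Icc_self hy)).1
        have hd2 := (hmem y (Ioo_subset_Icc_self hy)).2
        obtain ⟨hP, hPxm⟩ := hφdom y hd1 hd2
        have hyneg : y < 0 := lt_of_lt_of_le hd2 hyplus.2
        have hV : V (φ y / d) < v₀ := V_lt_v₀ hd hv₀ (lt_of_lt_of_le hPxm hxmInf)
        set A := α * (V (φ y / d) - v₀ + y) with hA
        clear_value A
        have hAneg : A < 0 := by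
          rw [hA]; exact mul_neg_of_pos_of_neg hα (by linarith)
        have hBneg : β * y / (φ y)^2 < 0 :=
          div_neg_of_neg_of_pos (mul_neg_of_pos_of_neg hβ hyneg) (pow_pos hP 2)
        have hDneg : A + β * y / (φ y)^2 < 0 := by linarith
        have hEneg : A * (φ y)^2 + β * y < 0 := by nlinarith [pow_pos hP 2]
        have hDeq : A + β * y / (φ y)^2 = (A * (φ y)^2 + β * y) / (φ y)^2 := by
          field_simp [pow_ne_zero 2 hP.ne']
        have key : 1/β - (-(-y / (A + β * y / (φ y) ^ 2)) / (φ y)^2)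
            = (A * (φ y)^2) / (β * (A * (φ y)^2 + β * y)) := by
          rw [hDeq, div_div_eq_mul_div]
          field_simp [hEneg.ne]
          have hX : β * y + φ y ^ 2 * A ≠ 0 := by linarith
          linear_combination -(mul_inv_cancel₀ hX)
        rw [key]
        exact le_of_lt (div_pos_of_neg_of_neg (by nlinarith [pow_pos hP 2])
          (mul_neg_of_pos_of_neg hβ hEneg))
    have h0 : g y₀ = 0 := by simp [hg, hφinit]
    have hge : 0 ≤ g y1 := by
      rw [← h0]
      exact hmono (left_mem_Icc.2 hy1l) ⟨hy1l, le_refl y1⟩ hy1l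
    have hP1 := (hφdom y1 hy1l hy1r).1
    have hc : (φ y1)⁻¹ ≤ 1 / x₀ + (y1 - y₀) / β := by
      simp only [hg] at hge; linarith
    have := inv_anti₀ (inv_pos.2 hP1) hc
    rwa [inv_inv] at this
  refine ⟨main, ?_, ?_⟩
  · intro y hy1 hy2
    refine le_trans ?_ (main y hy1 hy2)
    apply inv_anti₀
    · have : 0 ≤ (y - y₀) / β := div_nonneg (by linarith) hβ.le
      have : 0 < 1 / x₀ := by positivity
      linarith
    · have hyle : y - y₀ ≤ -y₀ := by
        have : y < 0 := lt_of_lt_of_le hy2 hyplus.2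
        linarith
      gcongr
  · apply inv_pos.2
    have h1 : 0 < 1 / x₀ := by positivity
    have h2 : 0 < (-y₀)/β := div_pos (by linarith) hβ
    linarith
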